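/- Let L > 0 and let φ_L be the truncated mean curvature function (φ_L(t) = 1/√(1+t) on [0,L], φ_L(t) = x_L(t−L−1)²+y_L on [L,L+1], φ_L(t) = y_L for t ≥ L+1, with x_L = √(1+L)/(4(1+L)²), y_L = (4L+3)x_L). Then the map t ↦ φ_L(t²)·t is strictly increasing on (0,∞). -/

import Mathlib

noncomputable def xL (L : ℝ) : ℝ := Real.sqrt (1 + L) / (4 * (1 + L) ^ 2)

noncomputable def yL (L : ℝ) : ℝ := (4 * L + 3) * xL L

noncomputable def phiL (L : ℝ) (t : ℝ) : ℝ :=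
  if t ≤ L then 1 / Real.sqrt (1 + t)
  else if t ≤ L + 1 then xL L * (t - L - 1) ^ 2 + yL L
  else yL L

lemma xL_pos {L : ℝ} (hL : 0 < L) : 0 < xL L := by
  unfold xL
  have h1 : (0:ℝ) < 1 + L := by linarith
  positivity

lemma yL_pos {L : ℝ} (hL : 0 < L) : 0 < yL L := by
  unfold yL
  have := xL_pos hL
  nlinarith

lemma phiL_pos {L : ℝ} (hL : 0 < L) (t : ℝ) (ht : 0 ≤ t) : 0 < phiL L t := by
  unfold phiL
  split_ifs with h1 h2
  · have : (0:ℝ) < 1 + t := by linarith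
    positivity
  · have hx := xL_pos hL
    have hy := yL_pos hL
    positivity
  · exact yL_pos hL

lemma phiL_at_L {L : ℝ} (hL : 0 < L) :
    phiL L L = xL L * (L - L - 1) ^ 2 + yL L := by
  have h1 : (0:ℝ) < 1 + L := by linarith
  have hs : Real.sqrt (1 + L) ^ 2 = 1 + L := Real.sq_sqrt h1.le
  have hs0 : 0 < Real.sqrt (1 + L) := Real.sqrt_pos.2 h1
  unfold phiL
  rw [if_pos le_rfl]
  unfold yL xL
  field_simp
  nlinarith [hs, hs0]

/-- `G u = (phiL L u)^2 * u` is strictly monotone on `[0, ∞)`. -/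
lemma G_strictMono {L : ℝ} (hL : 0 < L) :
    StrictMonoOn (fun u : ℝ => (phiL L u) ^ 2 * u) (Set.Ici 0) := by
  set G : ℝ → ℝ := fun u : ℝ => (phiL L u) ^ 2 * u with hG
  have hx := xL_pos hL
  have hy := yL_pos hL
  -- piece 1 : [0, L]
  have h1 : StrictMonoOn G (Set.Icc 0 L) := by
    intro u hu v hv huv
    simp only [Set.mem_Icc] at hu hv
    have hGu : G u = u / (1 + u) := by
      have h1u : (0:ℝ) < 1 + u := by linarith [hu.1]
      simp only [hG, phiL, if_pos hu.2]
      rw [div_pow, one_pow, Real.sq_sqrt h1u.le]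
      ring
    have hGv : G v = v / (1 + v) := by
      have h1v : (0:ℝ) < 1 + v := by linarith [hv.1]
      simp only [hG, phiL, if_pos hv.2]
      rw [div_pow, one_pow, Real.sq_sqrt h1v.le]
      ring
    rw [hGu, hGv, div_lt_div_iff₀ (by linarith [hu.1]) (by linarith [hv.1])]
    nlinarith [hu.1]
  -- piece 2 : [L, L+1], where G agrees with a polynomial P
  set P : ℝ → ℝ := fun u : ℝ => (xL L * (u - L - 1) ^ 2 + yL L) ^ 2 * u with hPdef
  have hGP : ∀ u ∈ Set.Icc L (L + 1), G u = P u := by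
    intro u hu
    simp only [Set.mem_Icc] at hu
    rcases eq_or_lt_of_le hu.1 with rfl | h
    · simp only [hG, hPdef]; rw [phiL_at_L hL]
    · simp only [hG, hPdef, phiL, if_neg (not_le.2 h), if_pos hu.2]
  have hPderiv : ∀ u : ℝ, HasDerivAt P
      ((2 * (xL L * (u - L - 1) ^ 2 + yL L) * (xL L * (2 * (u - L - 1)))) * u
        + (xL L * (u - L - 1) ^ 2 + yL L) ^ 2 * 1) u := by
    intro u
    have h0 : HasDerivAt (fun u : ℝ => u - L - 1) 1 u := by
      simpa using ((hasDerivAt_id u).sub_const L).sub_const 1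
    have h1 : HasDerivAt (fun u : ℝ => xL L * (u - L - 1) ^ 2 + yL L)
        (xL L * (2 * (u - L - 1))) u := by
      have := ((h0.pow 2).const_mul (xL L)).add_const (yL L)
      simpa using this
    have h3 := (h1.pow 2).mul (hasDerivAt_id u)
    have h4 : HasDerivAt P
        (2 * (xL L * (u - L - 1) ^ 2 + yL L) ^ 1 * (xL L * (2 * (u - L - 1))) * u
          + (xL L * (u - L - 1) ^ 2 + yL L) ^ 2 * 1) u := by
      convert h3 using 1
      · rfl
      · rfl
      · rfl
      · simp only [id, Pi.pow_apply]; ring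
    simpa using h4
  have hP : StrictMonoOn P (Set.Icc L (L + 1)) := by
    apply strictMonoOn_of_deriv_pos (convex_Icc L (L + 1))
    · exact fun u _ => ((hPderiv u).continuousAt).continuousWithinAt
    · intro u hu
      rw [interior_Icc] at hu
      rw [(hPderiv u).deriv]
      have hu1 := hu.1
      have hu2 := hu.2
      have hyLeq : yL L = (4 * L + 3) * xL L := rfl
      have hA : 0 < (u - L - 1) ^ 2 + (4 * L + 3) := by nlinarith
      have hB : 0 < 4 * (u - L - 1) * u + ((u - L - 1) ^ 2 + (4 * L + 3)) := by
        nlinarith [sq_nonneg (5 * (L + 1 - u) - 2),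
          mul_nonneg hL.le (by linarith : (0:ℝ) ≤ L + 1 - u)]
      rw [hyLeq]
      nlinarith [mul_pos (mul_pos hx hx) (mul_pos hA hB)]
  have h2 : StrictMonoOn G (Set.Icc L (L + 1)) := by
    intro u hu v hv huv
    rw [hGP u hu, hGP v hv]; exact hP hu hv huv
  -- piece 3 : [L+1, ∞)
  have h3 : StrictMonoOn G (Set.Ici (L + 1)) := by
    intro u hu v hv huv
    simp only [Set.mem_Ici] at hu hv
    have hGu : ∀ w : ℝ, L + 1 ≤ w → G w = yL L ^ 2 * w := by
      intro w hw
      rcases eq_or_lt_of_le hw with rfl | h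
      · simp only [hG, phiL, if_neg (not_le.2 (by linarith : L < L + 1)), if_pos le_rfl]
        ring_nf
      · simp only [hG, phiL, if_neg (not_le.2 (by linarith : L < w)),
          if_neg (not_le.2 h)]
    rw [hGu u hu, hGu v hv]
    exact mul_lt_mul_of_pos_left huv (by positivity)
  -- glue
  have h12 : StrictMonoOn G (Set.Icc 0 (L + 1)) := by
    rw [← Set.Icc_union_Icc_eq_Icc hL.le (by linarith : L ≤ L + 1)]
    exact h1.union h2 ⟨⟨hL.le, le_rfl⟩, fun x hx => hx.2⟩ ⟨⟨le_rfl, by linarith⟩, fun x hx => hx.1⟩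
  have hall : StrictMonoOn G (Set.Ici 0) := by
    rw [← Set.Icc_union_Ici_eq_Ici (by linarith : (0:ℝ) ≤ L + 1)]
    exact h12.union h3 ⟨⟨by linarith, le_rfl⟩, fun x hx => hx.2⟩ ⟨Set.self_mem_Ici, fun x hx => hx⟩
  exact hall

theorem stmt_3 (L : ℝ) (hL : 0 < L) :
    StrictMonoOn (fun t : ℝ => phiL L (t ^ 2) * t) (Set.Ioi 0) := by
  intro a ha b hb hab
  simp only [Set.mem_Ioi] at ha hb
  have hGa : (phiL L (a ^ 2)) ^ 2 * a ^ 2 < (phiL L (b ^ 2)) ^ 2 * b ^ 2 :=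
    G_strictMono hL (Set.mem_Ici.2 (by positivity)) (Set.mem_Ici.2 (by positivity))
      (by nlinarith : a ^ 2 < b ^ 2)
  have hpa : 0 < phiL L (a ^ 2) * a :=
    mul_pos (phiL_pos hL _ (by positivity)) ha
  have hpb : 0 < phiL L (b ^ 2) * b :=
    mul_pos (phiL_pos hL _ (by positivity)) hb
  have hsq : (phiL L (a ^ 2) * a) ^ 2 < (phiL L (b ^ 2) * b) ^ 2 := by
    nlinarith [hGa]
  simp only
  nlinarith [hsq, hpa, hpb]
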